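/- Let $a$ be a positive integer, let $n \ge 1$, let $\varepsilon > 0$, and set $r = \frac{1}{2n} + \frac{\varepsilon}{2}$ and $t_i = \frac{2i-1}{2n}$ for $i = 1, \dots, n$. Then for every sequence $0 \le b_1 \le b_2 \le \dots \le b_n \le 1$ satisfying $b_1 \le r$, $1 - b_n \le r$, and $b_{i+1} - b_i \le 2r$ for $i = 1, \dots, n-1$, one has $\max_{1 \le i \le n} |b_i - t_i| \le n \varepsilon$, and consequently $\sum_{i=1}^{n} |b_i - t_i|^a \le n^{a+1} \varepsilon^{a}$. -/

import Mathlib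

/-- For a positive integer `a`, `n ≥ 1`, `ε > 0`, radius
`r = 1/(2n) + ε/2`, and anchors `tᵢ = (2i-1)/(2n)`: every covering configuration
`0 ≤ b₁ ≤ ⋯ ≤ bₙ ≤ 1` (with `b₁ ≤ r`, `1 - bₙ ≤ r`, `b_{i+1} - bᵢ ≤ 2r`) satisfies
`|bᵢ - tᵢ| ≤ n ε` for all `i`, hence `∑ᵢ |bᵢ - tᵢ|ᵃ ≤ n^{a+1} εᵃ`. -/
theorem stmt5 (a : ℕ) (ha : 0 < a) (n : ℕ) (hn : 1 ≤ n) (ε : ℝ) (hε : 0 < ε)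
    (b : ℕ → ℝ)
    (hb0 : 0 ≤ b 1) (hb1 : b n ≤ 1)
    (hmono : ∀ i ∈ Finset.Icc 1 (n - 1), b i ≤ b (i + 1))
    (hleft : b 1 ≤ 1 / (2 * n) + ε / 2)
    (hright : 1 - b n ≤ 1 / (2 * n) + ε / 2)
    (hgap : ∀ i ∈ Finset.Icc 1 (n - 1), b (i + 1) - b i ≤ 2 * (1 / (2 * n) + ε / 2)) :
    (∀ i ∈ Finset.Icc 1 n, |b i - (2 * (i : ℝ) - 1) / (2 * n)| ≤ n * ε) ∧
    ∑ i ∈ Finset.Icc 1 n, |b i - (2 * (i : ℝ) - 1) / (2 * n)| ^ a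
      ≤ (n : ℝ) ^ (a + 1) * ε ^ a := by
  have hn0 : (0:ℝ) < n := by exact_mod_cast hn
  set d : ℝ := 1 / (2 * n) with hdd
  have hd : 2 * (n:ℝ) * d = 1 := by rw [hdd]; field_simp [hn0.ne']
  have hA : ∀ i, 1 ≤ i → i ≤ n → b i ≤ b 1 + ((i:ℝ) - 1) * (2 * (d + ε / 2)) := by
    intro i
    induction i with
    | zero => omega
    | succ k ih =>
      intro h1 h2
      rcases Nat.eq_zero_or_pos k with hk | hk
      · subst hk; simp
      · have hk2 : k ≤ n := by omega
        have := ih hk hk2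
        have hmem : k ∈ Finset.Icc 1 (n - 1) := by simp; omega
        have hg := hgap k hmem
        push_cast
        linarith
  have hB : ∀ k, k ≤ n - 1 → b n - b (n - k) ≤ (k:ℝ) * (2 * (d + ε / 2)) := by
    intro k
    induction k with
    | zero => simp
    | succ m ih =>
      intro h
      have := ih (by omega)
      have hmem : n - (m + 1) ∈ Finset.Icc 1 (n - 1) := by simp; omega
      have hg := hgap _ hmem
      have he : n - (m + 1) + 1 = n - m := by omega
      rw [he] at hg
      push_cast
      linarith
  have key : ∀ i ∈ Finset.Icc 1 n, |b i - (2 * (i : ℝ) - 1) / (2 * n)| ≤ n * ε := by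
    intro i hi
    simp only [Finset.mem_Icc] at hi
    obtain ⟨h1, h2⟩ := hi
    have h1r : (1:ℝ) ≤ i := by exact_mod_cast h1
    have h2r : (i:ℝ) ≤ n := by exact_mod_cast h2
    have hAi := hA i h1 h2
    have hBi := hB (n - i) (by omega)
    rw [Nat.sub_sub_self h2] at hBi
    have hcast : ((n - i : ℕ) : ℝ) = (n:ℝ) - i := by
      push_cast [Nat.cast_sub h2]; ring
    rw [hcast] at hBi
    have ht : (2 * (i : ℝ) - 1) / (2 * n) = (2 * (i:ℝ) - 1) * d := by
      rw [hdd]; field_simp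
    rw [ht, abs_le]
    constructor
    · nlinarith [mul_nonneg (sub_nonneg.mpr h2r) hε.le]
    · nlinarith [mul_nonneg (sub_nonneg.mpr h2r) hε.le]
  refine ⟨key, ?_⟩
  calc ∑ i ∈ Finset.Icc 1 n, |b i - (2 * (i : ℝ) - 1) / (2 * n)| ^ a
      ≤ ∑ i ∈ Finset.Icc 1 n, ((n:ℝ) * ε) ^ a := by
        apply Finset.sum_le_sum
        intro i hi
        exact pow_le_pow_left₀ (abs_nonneg _) (key i hi) a
    _ = (n : ℝ) ^ (a + 1) * ε ^ a := by
        rw [Finset.sum_const, Nat.card_Icc, mul_pow, nsmul_eq_mul]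
        push_cast
        rw [pow_succ]
        ring
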